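/- Suppose M ≥ 10, L ≥ max(0.62, 0.15*M), r ≥ 1 with r ≥ sup_{y∈[0,1]} |Q*s(y)|, and 0 < t < 1/(B+C). Then there exists ε₀ > 0 such that for every ε with 0 < ε ≤ min(ε₀, B/(2*(L*r + L + r))), any r-admissible fixed point Φ* of the graph transform in G_L satisfies Φ*(1)(1) < T_c; consequently the iceline increment G(Φ*(1), 1) = ε*(Φ*(1)(1) - T_c) at the pole η = 1 is negative, i.e. an ice line placed at the pole moves equatorward and the ice-free earth is unstable. -/

import Mathlib

noncomputable section

open scoped BoundedContinuousFunction

namespace Budyko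

/-- Solar constant (W/m²). -/
def Q : ℝ := 343
/-- OLR constant A (W/m²). -/
def A : ℝ := 202
/-- OLR constant B (W/m²/°C). -/
def B : ℝ := 1.9
/-- Transport constant C (W/m²/°C). -/
def C : ℝ := 3.04
/-- Critical temperature (°C). -/
def Tc : ℝ := -10

/-- Insolation distribution. -/
def s (y : ℝ) : ℝ := 1 - 0.241 * (3 * y ^ 2 - 1)

/-- Clamp to `[0,1]`. -/
def clamp (y : ℝ) : ℝ := min (max y 0) 1

/-- Insolation extended to the real line. -/
def sTilde (y : ℝ) : ℝ := s (clamp y)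

/-- Iceline-dependent smooth albedo with steepness `M`. -/
def albedo (M η y : ℝ) : ℝ := 0.47 + 0.15 * Real.tanh (M * (clamp y - η))

/-- The Budyko vector field `F(T,η)(y)`. -/
def F (M : ℝ) (T : ℝ →ᵇ ℝ) (η y : ℝ) : ℝ :=
  Q * sTilde y * (1 - albedo M η y) - (B + C) * T y - A + C * ∫ u in (0:ℝ)..1, T u

/-- `g(η) = ∫₀¹ Q s(y) (1 - a(η)(y)) dy`. -/
def g (M η : ℝ) : ℝ := ∫ y in (0:ℝ)..1, Q * s y * (1 - albedo M η y)

/-- The local equilibrium temperature profile `T*(η)(y)`. -/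
def Tstar (M η y : ℝ) : ℝ :=
  (Q * sTilde y * (1 - albedo M η y) - A + (C / B) * (g M η - A)) / (B + C)

/-- Membership in the class `G_L` of Lipschitz graphs. -/
def MemGL (L : ℝ) (Φ : ℝ → ℝ →ᵇ ℝ) : Prop :=
  ∀ ζ η : ℝ, ‖Φ ζ - Φ η‖ ≤ L * |ζ - η|

/-- A graph is `r`-admissible if `‖Φ‖_G ≤ r` and every `Φ(η)` is `r`-Lipschitz. -/
def Admissible (r : ℝ) (Φ : ℝ → ℝ →ᵇ ℝ) : Prop :=
  (∀ η : ℝ, ‖Φ η‖ ≤ r) ∧ ∀ η x z : ℝ, |Φ η x - Φ η z| ≤ r * |x - z|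

/-- `Ψ` is a graph-transform image of `Φ` (time step `t`, slow parameter `ε`). -/
def IsGTImage (M t ε : ℝ) (Φ Ψ : ℝ → ℝ →ᵇ ℝ) : Prop :=
  ∀ η ξ : ℝ, η = ξ + ε * t * (Φ ξ ξ - Tc) → ∀ y : ℝ, Ψ η y = Φ ξ y + t * F M (Φ ξ) ξ y

/-- `Φ` is a fixed point of the Budyko graph transform. -/
def IsGTFixed (M t ε : ℝ) (Φ : ℝ → ℝ →ᵇ ℝ) : Prop := IsGTImage M t ε Φ Φ
lemma neg_one_lt_tanh' (x : ℝ) : -1 < Real.tanh x := by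
  rw [Real.tanh_eq_sinh_div_cosh, lt_div_iff₀ (Real.cosh_pos x), Real.sinh_eq, Real.cosh_eq]
  nlinarith [Real.exp_pos x, Real.exp_pos (-x)]

lemma continuous_clamp : Continuous clamp :=
  (continuous_id.max continuous_const).min continuous_const

lemma continuous_tanh' : Continuous Real.tanh := by
  have h : ∀ x : ℝ, Real.tanh x = Real.sinh x / Real.cosh x := fun x =>
    Real.tanh_eq_sinh_div_cosh x
  simp only [funext h]
  exact Real.continuous_sinh.div Real.continuous_cosh fun x => (Real.cosh_pos x).ne'


/-- Instability of the ice free earth: for ε small, on the invariant graph the iceline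
temperature at the pole is below critical, so the iceline moves equatorward. -/
theorem ice_free_earth_unstable (M L r t : ℝ)
    (hM : 10 ≤ M) (hL : max 0.62 (0.15 * M) ≤ L) (hr1 : 1 ≤ r)
    (hrs : ∀ y ∈ Set.Icc (0:ℝ) 1, |Q * s y| ≤ r)
    (ht0 : 0 < t) (ht1 : t < 1 / (B + C)) :
    ∃ ε₀ > (0:ℝ), ∀ ε : ℝ, 0 < ε → ε ≤ min ε₀ (B / (2 * (L * r + L + r))) →
      ∀ Φs : ℝ → ℝ →ᵇ ℝ,
        Admissible r Φs → MemGL L Φs → IsGTFixed M t ε Φs →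
          Φs 1 1 < Tc ∧ ε * (Φs 1 1 - Tc) < 0 := by
  have hL0 : (0:ℝ) < L := lt_of_lt_of_le (by norm_num) ((le_max_left _ _).trans hL)
  have hr0 : (0:ℝ) < r + 10 := by linarith
  refine ⟨1 / (L * (r + 10)), by positivity, ?_⟩
  intro ε hε0 hεle Φs hAdm hGL hFix
  set T : ℝ →ᵇ ℝ := Φs 1 with hTdef
  set I : ℝ := ∫ u in (0:ℝ)..1, T u with hIdef
  -- ε small
  have hδ : L * ε * (r + 10) ≤ 1 := by
    have h1 : ε ≤ 1 / (L * (r + 10)) := (le_min_iff.mp hεle).1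
    have h2 : (0:ℝ) < L * (r + 10) := by positivity
    have := (le_div_iff₀ h2).mp h1
    nlinarith
  -- key bound on F
  have hT1 : |T 1 - Tc| ≤ r + 10 := by
    have h1 : ‖T‖ ≤ r := hAdm.1 1
    have h2 : |T 1| ≤ r := le_trans (T.norm_coe_le_norm 1) h1
    rw [abs_le] at h2
    rw [Tc, abs_le]
    constructor <;> linarith [h2.1, h2.2]
  have key : ∀ y : ℝ, |F M T 1 y| ≤ L * ε * (r + 10) := by
    intro y
    set η : ℝ := 1 + ε * t * (T 1 - Tc) with hηdef
    have h1 : Φs η y = T y + t * F M T 1 y := hFix η 1 rfl y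
    have h2 : |Φs η y - T y| ≤ L * (ε * t * |T 1 - Tc|) := by
      have h3 : |Φs η y - T y| ≤ ‖Φs η - T‖ := by
        have := (Φs η - T).norm_coe_le_norm y
        simpa using this
      have h4 : ‖Φs η - T‖ ≤ L * |η - 1| := hGL η 1
      have h5 : |η - 1| = ε * t * |T 1 - Tc| := by
        rw [hηdef]
        rw [show 1 + ε * t * (T 1 - Tc) - 1 = ε * t * (T 1 - Tc) by ring,
          abs_mul, abs_of_pos (by positivity : (0:ℝ) < ε * t)]
      linarith [h4, h5 ▸ h4, h3]
    rw [h1] at h2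
    have h6 : |t * F M T 1 y| ≤ L * (ε * t * (r + 10)) := by
      have : |T y + t * F M T 1 y - T y| = |t * F M T 1 y| := by ring_nf
      rw [this] at h2
      have : L * (ε * t * |T 1 - Tc|) ≤ L * (ε * t * (r + 10)) := by
        apply mul_le_mul_of_nonneg_left _ hL0.le
        exact mul_le_mul_of_nonneg_left hT1 (by positivity)
      linarith
    rw [abs_mul, abs_of_pos ht0] at h6
    have := (mul_le_mul_iff_right₀ ht0).mp (by linarith : t * |F M T 1 y| ≤ t * (L * ε * (r + 10)))
    linarith
  -- continuity facts
  have hconts : Continuous s := by unfold s; continuity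
  have hcontal : Continuous (fun y => albedo M 1 y) := by
    unfold albedo
    exact continuous_const.add (continuous_const.mul
      (continuous_tanh'.comp ((continuous_const.mul (continuous_clamp.sub continuous_const)))))
  set f1 : ℝ → ℝ := fun y => Q * sTilde y * (1 - albedo M 1 y) with hf1def
  have hcontf1 : Continuous f1 := by
    apply Continuous.mul
    · exact continuous_const.mul (hconts.comp continuous_clamp)
    · exact continuous_const.sub hcontal
  have hi1 : IntervalIntegrable f1 MeasureTheory.volume 0 1 := hcontf1.intervalIntegrable _ _
  have hiT : IntervalIntegrable (fun y => T y) MeasureTheory.volume 0 1 :=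
    T.continuous.intervalIntegrable _ _
  set G1 : ℝ := ∫ y in (0:ℝ)..1, f1 y with hG1def
  -- F decomposition
  have hFdef : ∀ y : ℝ, F M T 1 y = f1 y - (B + C) * T y + (C * I - A) := by
    intro y; simp only [F, hf1def, hIdef]; ring
  -- integral of F
  have hintF : (∫ y in (0:ℝ)..1, F M T 1 y) = G1 - (B + C) * I + (C * I - A) := by
    simp_rw [hFdef]
    rw [intervalIntegral.integral_add (hi1.sub (hiT.const_mul _)) intervalIntegrable_const,
      intervalIntegral.integral_sub hi1 (hiT.const_mul _),
      intervalIntegral.integral_const_mul, intervalIntegral.integral_const]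
    simp [hG1def, hIdef]
  -- bound on G1
  have hG1le : G1 ≤ 233.24 := by
    have hle : ∀ y ∈ Set.Icc (0:ℝ) 1, f1 y ≤ 0.68 * (Q * s y) := by
      intro y hy
      have hcl : clamp y = y := by
        simp only [clamp, max_eq_left hy.1, min_eq_left hy.2]
      have hsy : (0:ℝ) ≤ Q * s y := by
        simp only [Q, s]
        nlinarith [hy.1, hy.2, sq_nonneg y]
      have htanh : -1 < Real.tanh (M * (clamp y - 1)) := neg_one_lt_tanh' _
      have hal : 1 - albedo M 1 y ≤ 0.68 := by
        simp only [albedo]; nlinarith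
      calc f1 y = (Q * s y) * (1 - albedo M 1 y) := by
            simp only [hf1def, sTilde, hcl]
        _ ≤ (Q * s y) * 0.68 := mul_le_mul_of_nonneg_left hal hsy
        _ = 0.68 * (Q * s y) := by ring
    calc G1 ≤ ∫ y in (0:ℝ)..1, 0.68 * (Q * s y) := by
          apply intervalIntegral.integral_mono_on (by norm_num) hi1
            ((continuous_const.mul (continuous_const.mul hconts)).intervalIntegrable _ _) hle
      _ = 233.24 := by
          have heq : ∀ y : ℝ, 0.68 * (Q * s y) = 289.45084 - 168.63252 * y ^ 2 := by
            intro y; simp only [Q, s]; ring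
          simp_rw [heq]
          rw [intervalIntegral.integral_sub (g := fun y : ℝ => (168.63252:ℝ) * y ^ 2) intervalIntegrable_const
              ((continuous_const.mul (continuous_pow 2)).intervalIntegrable _ _),
            intervalIntegral.integral_const, intervalIntegral.integral_const_mul,
            integral_pow]
          norm_num
  -- bound on ∫ F
  have hJ : |∫ y in (0:ℝ)..1, F M T 1 y| ≤ L * ε * (r + 10) := by
    have := intervalIntegral.norm_integral_le_of_norm_le_const
      (C := L * ε * (r + 10)) (f := fun y => F M T 1 y) (a := 0) (b := 1)
      (fun x _ => by simpa using key x)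
    simpa using this
  -- value at y = 1
  have hst1 : sTilde 1 = 0.518 := by norm_num [sTilde, clamp, s]
  have hal1 : albedo M 1 1 = 0.47 := by
    simp only [albedo, clamp]
    norm_num [Real.tanh_zero]
  have hval : F M T 1 1 = Q * 0.518 * 0.53 - (B + C) * T 1 - A + C * I := by
    simp only [F, hst1, hal1, hIdef]
    norm_num
  -- conclude
  have hF1 : |F M T 1 1| ≤ 1 := le_trans (key 1) hδ
  have hJ1 : |∫ y in (0:ℝ)..1, F M T 1 y| ≤ 1 := le_trans hJ hδ
  rw [abs_le] at hF1 hJ1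
  rw [hintF] at hJ1
  have hfinal : T 1 < Tc := by
    simp only [Q, A, B, C, Tc] at hval hJ1 ⊢
    linarith [hF1.1, hF1.2, hJ1.1, hJ1.2, hval, hG1le]
  exact ⟨hfinal, mul_neg_of_pos_of_neg hε0 (by linarith)⟩
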